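/- For any real B > 1, real C ≥ 1, and positive integer ν, the generalized divisor function satisfies d_B(p^ν)^C ≪_{B,C} (5/4)^ν · (1 + ν/(B-1))^{(B-1)C}, where d_B(p^ν) = binomial(B+ν-1, ν). -/

import Mathlib

open Finset Real

private lemma gamma_prod (B : ℝ) (hB : 0 < B) (ν : ℕ) :
    Real.Gamma (B + ν) = Real.Gamma B * ∏ k ∈ range ν, (B + k) := by
  induction ν with
  | zero => simp
  | succ n ih =>
    have h1 : B + (n + 1 : ℕ) = (B + n) + 1 := by push_cast; ring
    have h2 : (B + n) ≠ 0 := by positivity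
    rw [h1, Real.Gamma_add_one h2, ih, prod_range_succ]
    ring

private lemma dB_le (B : ℝ) (hB : 1 < B) (ν : ℕ) (hν : 0 < ν) :
    Real.Gamma (B + ν) / (Real.Gamma B * Nat.factorial ν) ≤
      Real.exp (B - 1) * (ν : ℝ) ^ (B - 1) := by
  have hB0 : (0:ℝ) < B := by linarith
  have hG : 0 < Real.Gamma B := Real.Gamma_pos_of_pos hB0
  have hfact : (Nat.factorial ν : ℝ) = ∏ k ∈ range ν, ((k : ℝ) + 1) := by
    rw [← Finset.prod_range_add_one_eq_factorial]; push_cast; ring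
  have hP : Real.Gamma (B + ν) / (Real.Gamma B * Nat.factorial ν)
      = ∏ k ∈ range ν, ((B + k) / ((k : ℝ) + 1)) := by
    rw [gamma_prod B hB0 ν, hfact, mul_div_mul_left _ _ (ne_of_gt hG)]
    exact (Finset.prod_div_distrib _ _).symm
  rw [hP]
  have hstep : ∏ k ∈ range ν, ((B + k) / ((k : ℝ) + 1)) ≤
      ∏ k ∈ range ν, Real.exp ((B - 1) / ((k : ℝ) + 1)) := by
    apply Finset.prod_le_prod
    · intro k _; positivity
    · intro k _
      have hk : (0:ℝ) < (k : ℝ) + 1 := by positivity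
      have heq : (B + k) / ((k : ℝ) + 1) = (B - 1) / ((k : ℝ) + 1) + 1 := by
        field_simp
        ring
      rw [heq]
      exact Real.add_one_le_exp _
  refine hstep.trans ?_
  rw [← Real.exp_sum]
  have hsum : ∑ k ∈ range ν, (B - 1) / ((k : ℝ) + 1) = (B - 1) * (harmonic ν : ℝ) := by
    rw [harmonic]
    push_cast
    rw [Finset.mul_sum]
    refine Finset.sum_congr rfl fun k _ => ?_
    rw [div_eq_mul_inv]
  rw [hsum]
  have hharm : (harmonic ν : ℝ) ≤ 1 + Real.log ν := harmonic_le_one_add_log ν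
  have hBpos : (0:ℝ) ≤ B - 1 := by linarith
  have : (B - 1) * (harmonic ν : ℝ) ≤ (B - 1) * (1 + Real.log ν) :=
    mul_le_mul_of_nonneg_left hharm hBpos
  calc Real.exp ((B - 1) * (harmonic ν : ℝ))
      ≤ Real.exp ((B - 1) * (1 + Real.log ν)) := Real.exp_le_exp.mpr this
    _ = Real.exp (B - 1) * (ν : ℝ) ^ (B - 1) := by
        rw [mul_add, mul_one, Real.exp_add]
        congr 1
        rw [Real.rpow_def_of_pos (by exact_mod_cast hν), mul_comm]

theorem stmt_0 (B C : ℝ) (hB : 1 < B) (hC : 1 ≤ C) :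
    ∃ K : ℝ, 0 < K ∧ ∀ ν : ℕ, 0 < ν →
      (Real.Gamma (B + ν) / (Real.Gamma B * Nat.factorial ν)) ^ C ≤
        K * (5 / 4 : ℝ) ^ ν * (1 + (ν : ℝ) / (B - 1)) ^ ((B - 1) * C) := by
  have ht : (0:ℝ) < B - 1 := by linarith
  have hC0 : (0:ℝ) ≤ C := by linarith
  refine ⟨Real.exp (B - 1) ^ C * (B - 1) ^ ((B - 1) * C), by positivity, fun ν hν => ?_⟩
  set t := B - 1 with htdef
  have hνpos : (0:ℝ) < ν := by exact_mod_cast hν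
  have hG : 0 < Real.Gamma B := Real.Gamma_pos_of_pos (by linarith)
  have hGν : 0 < Real.Gamma (B + ν) := Real.Gamma_pos_of_pos (by positivity)
  have hPpos : 0 < Real.Gamma (B + ν) / (Real.Gamma B * Nat.factorial ν) := by
    have : (0:ℝ) < Nat.factorial ν := by exact_mod_cast Nat.factorial_pos ν
    positivity
  have h1 : (Real.Gamma (B + ν) / (Real.Gamma B * Nat.factorial ν)) ^ C ≤
      (Real.exp t * (ν : ℝ) ^ t) ^ C :=
    Real.rpow_le_rpow hPpos.le (dB_le B hB ν hν) hC0
  have h2 : (Real.exp t * (ν : ℝ) ^ t) ^ C = Real.exp t ^ C * (ν : ℝ) ^ (t * C) := by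
    rw [Real.mul_rpow (Real.exp_pos t).le (Real.rpow_nonneg hνpos.le t),
      ← Real.rpow_mul hνpos.le]
  have hle : (ν : ℝ) ≤ t * (1 + (ν : ℝ) / t) := by
    rw [mul_add, mul_one, mul_div_cancel₀ _ (ne_of_gt ht)]
    linarith
  have h3 : (ν : ℝ) ^ (t * C) ≤ (t * (1 + (ν : ℝ) / t)) ^ (t * C) :=
    Real.rpow_le_rpow hνpos.le hle (by positivity)
  have h4 : (t * (1 + (ν : ℝ) / t)) ^ (t * C) =
      t ^ (t * C) * (1 + (ν : ℝ) / t) ^ (t * C) :=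
    Real.mul_rpow ht.le (by positivity)
  have hQ : (0:ℝ) ≤ (1 + (ν : ℝ) / t) ^ (t * C) := Real.rpow_nonneg (by positivity) _
  have h54 : (1:ℝ) ≤ (5 / 4 : ℝ) ^ ν := one_le_pow₀ (by norm_num)
  have hK : (0:ℝ) < Real.exp t ^ C * t ^ (t * C) := by positivity
  calc (Real.Gamma (B + ν) / (Real.Gamma B * Nat.factorial ν)) ^ C
      ≤ Real.exp t ^ C * (ν : ℝ) ^ (t * C) := h2 ▸ h1
    _ ≤ Real.exp t ^ C * ((t * (1 + (ν : ℝ) / t)) ^ (t * C)) :=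
        mul_le_mul_of_nonneg_left h3 (by positivity)
    _ = (Real.exp t ^ C * t ^ (t * C)) * (1 + (ν : ℝ) / t) ^ (t * C) := by
        rw [h4]; ring
    _ ≤ (Real.exp t ^ C * t ^ (t * C)) * (5 / 4 : ℝ) ^ ν * (1 + (ν : ℝ) / t) ^ (t * C) := by
        have := mul_le_mul_of_nonneg_right
          (mul_le_mul_of_nonneg_left h54 hK.le) hQ
        simpa [mul_assoc] using this
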